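/- arXiv:1506.07487 — 2 statements merged into one kernel-verified Lean document; each statement's English description precedes it below -/
import Mathlib

section
/- (Corrected Proposition 8.5.) Let X = (a_1, ..., a_m) be a finite list of nonzero vectors spanning ℂ^n and let μ : {1,...,m} → ℂ. Work in the field K = ℂ(x_1,...,x_n) of rational functions, the fraction field of ℂ[x_1,...,x_n], and for a vector a ∈ ℂ^n write a also for the linear polynomial Σ_j a_j x_j ∈ K. For p ∈ ℂ^n let X_p := { i : ⟨a_i | p⟩ + μ_i = 0 }, let P(X,μ) := { p ∈ ℂ^n : {a_i : i ∈ X_p} spans ℂ^n }, and for p ∈ P(X,μ) let L(X_p) be the family of subsets ℓ ⊆ X_p such that {a_i : i ∈ ℓ} spans ℂ^n. Then there exist complex numbers c_ℓ, indexed by the pairs (p, ℓ) with p ∈ P(X,μ) and ℓ ∈ L(X_p), such that in K one has ∏_{i=1}^m 1/(a_i + μ_i) = Σ_{p ∈ P(X,μ)} Σ_{ℓ ∈ L(X_p)} c_ℓ · ∏_{i ∈ ℓ} 1/(a_i + μ_i). -/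
open MvPolynomial

/-- The linear polynomial `∑ j, a j * x j ∈ ℂ[x_1, …, x_n]` attached to a vector `a ∈ ℂ^n`. -/
noncomputable def linForm {n : ℕ} (a : Fin n → ℂ) : MvPolynomial (Fin n) ℂ :=
  ∑ j, C (a j) * X j

/-- The element `a i + μ i` of the rational function field `K = ℂ(x_1, …, x_n)`. -/
noncomputable def affForm {n m : ℕ} (a : Fin m → (Fin n → ℂ)) (μ : Fin m → ℂ) (i : Fin m) :
    FractionRing (MvPolynomial (Fin n) ℂ) :=
  algebraMap (MvPolynomial (Fin n) ℂ) (FractionRing (MvPolynomial (Fin n) ℂ))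
    (linForm (a i) + C (μ i))

/-- `X_p`: the set of indices `i` such that `⟨a i | p⟩ + μ i = 0`. -/
def Xp {n m : ℕ} (a : Fin m → (Fin n → ℂ)) (μ : Fin m → ℂ) (p : Fin n → ℂ) : Set (Fin m) :=
  {i | (∑ j, a i j * p j) + μ i = 0}

/-- `P(X, μ)`: the points of the arrangement, i.e. the points `p` such that the
vectors `{a i : i ∈ X_p}` span `ℂ^n`. -/
def armPoints {n m : ℕ} (a : Fin m → (Fin n → ℂ)) (μ : Fin m → ℂ) : Set (Fin n → ℂ) :=
  {p | Submodule.span ℂ (a '' Xp a μ p) = ⊤}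

/-! ### Auxiliary lemmas -/

lemma coeff_linForm_add_C {n : ℕ} (a : Fin n → ℂ) (μ : ℂ) (j : Fin n) :
    MvPolynomial.coeff (Finsupp.single j 1) (linForm a + C μ) = a j := by
  have h0 : ¬(0 : Fin n →₀ ℕ) = Finsupp.single j 1 := by
    simp [eq_comm, Finsupp.single_eq_zero]
  simp only [coeff_add, linForm, coeff_sum, coeff_C_mul, coeff_X', coeff_C, if_neg h0, add_zero]
  rw [Finset.sum_eq_single j]
  · simp
  · intro b _ hb
    rw [if_neg, mul_zero]
    intro hh
    exact hb (Finsupp.single_left_injective one_ne_zero hh)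
  · simp

lemma linForm_add_C_ne_zero {n : ℕ} {a : Fin n → ℂ} (ha : a ≠ 0) (μ : ℂ) :
    linForm a + C μ ≠ 0 := by
  obtain ⟨j, hj⟩ : ∃ j, a j ≠ 0 := by
    by_contra h; push_neg at h; exact ha (funext h)
  intro h
  have := coeff_linForm_add_C a μ j
  rw [h, coeff_zero] at this
  exact hj this.symm

lemma affForm_ne_zero {n m : ℕ} {a : Fin m → (Fin n → ℂ)} (μ : Fin m → ℂ)
    (ha : ∀ i, a i ≠ 0) (i : Fin m) : affForm a μ i ≠ 0 := by
  unfold affForm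
  rw [Ne, map_eq_zero_iff _ (IsFractionRing.injective (MvPolynomial (Fin n) ℂ) _)]
  exact linForm_add_C_ne_zero (ha i) _

lemma sum_C_mul_linForm {n m : ℕ} (a : Fin m → (Fin n → ℂ)) (c : Fin m → ℂ)
    (S : Finset (Fin m)) :
    ∑ i ∈ S, C (c i) * linForm (a i) = linForm (∑ i ∈ S, c i • a i) := by
  simp only [linForm, Finset.mul_sum]
  rw [Finset.sum_comm]
  refine Finset.sum_congr rfl fun j _ => ?_
  rw [Finset.sum_apply]
  simp only [Pi.smul_apply, smul_eq_mul, map_sum, Finset.sum_mul, map_mul, mul_assoc]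

lemma sum_C_mul_aff {n m : ℕ} (a : Fin m → (Fin n → ℂ)) (μ : Fin m → ℂ) (c : Fin m → ℂ)
    (S : Finset (Fin m)) (h1 : ∑ i ∈ S, c i • a i = 0) (h2 : ∑ i ∈ S, c i * μ i = 1) :
    ∑ i ∈ S, C (c i) * (linForm (a i) + C (μ i)) = 1 := by
  simp only [mul_add, Finset.sum_add_distrib, sum_C_mul_linForm a c S, h1, ← map_mul, ← map_sum,
    h2]
  simp [linForm]

lemma fredholm {n m : ℕ} (a : Fin m → (Fin n → ℂ)) (μ : Fin m → ℂ) (S : Finset (Fin m))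
    (h : ∀ p : Fin n → ℂ, ∃ i ∈ S, (∑ j, a i j * p j) + μ i ≠ 0) :
    ∃ c : Fin m → ℂ, (∑ i ∈ S, c i • a i = 0) ∧ (∑ i ∈ S, c i * μ i = 1) := by
  classical
  let T : (Fin n → ℂ) →ₗ[ℂ] (S → ℂ) :=
    { toFun := fun p i => ∑ j, a i.1 j * p j
      map_add' := by
        intro p q; funext i; simp [mul_add, Finset.sum_add_distrib]
      map_smul' := by
        intro r p; funext i; simp [Finset.mul_sum, mul_left_comm] }
  let b : S → ℂ := fun i => -μ i.1
  have hb : b ∉ LinearMap.range T := by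
    rintro ⟨p, hp⟩
    obtain ⟨i, hiS, hi⟩ := h p
    apply hi
    have := congrFun hp ⟨i, hiS⟩
    simp only [T, b, LinearMap.coe_mk, AddHom.coe_mk] at this
    rw [this]; ring
  obtain ⟨f, hfb, hker⟩ :=
    Submodule.exists_dual_map_eq_bot_of_notMem hb inferInstance
  have hrange : ∀ p : Fin n → ℂ, f (T p) = 0 := by
    intro p
    have : f (T p) ∈ (LinearMap.range T).map f := ⟨T p, ⟨p, rfl⟩, rfl⟩
    rw [hker] at this
    simpa using this
  set c0 : S → ℂ := fun i => f (Pi.single i 1) with hc0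
  have hf : ∀ x : S → ℂ, f x = ∑ i, x i * c0 i := by
    intro x
    have hx : x = ∑ i, Pi.single i (x i) := (Finset.univ_sum_single x).symm
    conv_lhs => rw [hx, map_sum]
    refine Finset.sum_congr rfl fun i _ => ?_
    have h1 : Pi.single i (x i) = x i • (Pi.single i 1 : S → ℂ) := by
      rw [← Pi.single_smul, smul_eq_mul, mul_one]
    rw [h1, map_smul, smul_eq_mul, hc0]
  have horth : ∀ k, ∑ i : S, c0 i * a i.1 k = 0 := by
    intro k
    have := hrange (Pi.single k 1)
    rw [hf] at this
    simpa [T, Pi.single_apply, Finset.sum_ite_eq, mul_comm] using this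
  have hfbval : f b = ∑ i : S, (-μ i.1) * c0 i := by rw [hf]
  refine ⟨fun i => if hi : i ∈ S then -c0 ⟨i, hi⟩ / f b else 0, ?_, ?_⟩
  · funext k
    rw [show ((0 : Fin n → ℂ) k) = 0 from rfl, Finset.sum_apply]
    simp only [Pi.smul_apply, smul_eq_mul]
    rw [← Finset.sum_coe_sort S]
    have hterm : ∀ i : S, (if hi : i.1 ∈ S then -c0 ⟨i.1, hi⟩ / f b else 0) * a i.1 k
        = (-(1 / f b)) * (c0 i * a i.1 k) := by
      intro i
      rw [dif_pos i.2]
      simp only [Subtype.coe_eta]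
      ring
    rw [Finset.sum_congr rfl (fun i _ => hterm i), ← Finset.mul_sum, horth k, mul_zero]
  · rw [← Finset.sum_coe_sort S]
    have hterm : ∀ i : S, (if hi : i.1 ∈ S then -c0 ⟨i.1, hi⟩ / f b else 0) * μ i.1
        = (1 / f b) * ((-μ i.1) * c0 i) := by
      intro i
      rw [dif_pos i.2]
      simp only [Subtype.coe_eta]
      ring
    rw [Finset.sum_congr rfl (fun i _ => hterm i), ← Finset.mul_sum, ← hfbval,
      one_div_mul_cancel hfb]

lemma point_unique {n m : ℕ} {a : Fin m → (Fin n → ℂ)} {μ : Fin m → ℂ} {ℓ : Finset (Fin m)}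
    (hsp : Submodule.span ℂ (a '' (ℓ : Set (Fin m))) = ⊤)
    {p q : Fin n → ℂ} (hp : (ℓ : Set (Fin m)) ⊆ Xp a μ p) (hq : (ℓ : Set (Fin m)) ⊆ Xp a μ q) :
    p = q := by
  let f : (Fin n → ℂ) →ₗ[ℂ] ℂ :=
    { toFun := fun v => ∑ j, v j * (p j - q j)
      map_add' := by intro v w; simp [add_mul, Finset.sum_add_distrib]
      map_smul' := by intro r v; simp [Finset.mul_sum, mul_assoc] }
  have hker : ∀ x ∈ a '' (ℓ : Set (Fin m)), f x = 0 := by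
    rintro x ⟨i, hi, rfl⟩
    have h1 : (∑ j, a i j * p j) + μ i = 0 := hp hi
    have h2 : (∑ j, a i j * q j) + μ i = 0 := hq hi
    have h3 : ∑ j, a i j * p j = ∑ j, a i j * q j := add_right_cancel (h1.trans h2.symm)
    simp only [f, LinearMap.coe_mk, AddHom.coe_mk]
    rw [show (∑ j, a i j * (p j - q j)) = (∑ j, a i j * p j) - ∑ j, a i j * q j by
      rw [← Finset.sum_sub_distrib]; exact Finset.sum_congr rfl fun j _ => by ring]
    rw [h3, sub_self]
  have htop : (⊤ : Submodule ℂ (Fin n → ℂ)) ≤ LinearMap.ker f := by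
    rw [← hsp, Submodule.span_le]
    intro x hx
    exact hker x hx
  funext k
  have := htop (Submodule.mem_top : (Pi.single k 1 : Fin n → ℂ) ∈ ⊤)
  rw [LinearMap.mem_ker] at this
  simp only [f, LinearMap.coe_mk, AddHom.coe_mk, Pi.single_apply] at this
  rw [Finset.sum_eq_single k (fun b _ hb => by rw [if_neg hb]; ring) (by simp)] at this
  simp only [if_pos rfl, eq_self_iff_true, if_true, one_mul] at this
  exact sub_eq_zero.mp this

section rble
variable {ι : Type*} [Fintype ι] {K : Type*} [CommRing K] (φ : ℂ →+* K) (v : ι → K)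
  (Q : ι → Prop)

def Rble (x : K) : Prop :=
  ∃ d : ι → ℂ, (∀ t, d t ≠ 0 → Q t) ∧ x = ∑ t, φ (d t) * v t

lemma rble_zero : Rble φ v Q 0 :=
  ⟨0, fun t h => absurd rfl h, by simp⟩

lemma rble_add {x y : K} (hx : Rble φ v Q x) (hy : Rble φ v Q y) : Rble φ v Q (x + y) := by
  obtain ⟨d, hd, rfl⟩ := hx
  obtain ⟨e, he, rfl⟩ := hy
  refine ⟨d + e, fun t h => ?_, ?_⟩
  · by_cases h1 : d t ≠ 0
    · exact hd t h1
    · push_neg at h1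
      exact he t (by simpa [h1] using h)
  · rw [← Finset.sum_add_distrib]
    refine Finset.sum_congr rfl fun t _ => ?_
    simp [map_add, add_mul]

lemma rble_mul (r : ℂ) {x : K} (hx : Rble φ v Q x) : Rble φ v Q (φ r * x) := by
  obtain ⟨d, hd, rfl⟩ := hx
  refine ⟨fun t => r * d t, fun t h => hd t fun h0 => h (by simp [h0]), ?_⟩
  rw [Finset.mul_sum]
  exact Finset.sum_congr rfl fun t _ => by rw [map_mul, mul_assoc]

lemma rble_gen [DecidableEq ι] (t0 : ι) (h : Q t0) : Rble φ v Q (v t0) := by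
  refine ⟨fun t => if t = t0 then 1 else 0, fun t ht => ?_, ?_⟩
  · by_cases h1 : t = t0
    · exact h1 ▸ h
    · simp [h1] at ht
  · rw [Finset.sum_eq_single t0 (fun b _ hb => by simp [hb]) (by simp)]
    simp

lemma rble_sum {α : Type*} (s : Finset α) (g : α → K)
    (h : ∀ i ∈ s, Rble φ v Q (g i)) : Rble φ v Q (∑ i ∈ s, g i) := by
  classical
  induction s using Finset.induction_on with
  | empty => simpa using rble_zero φ v Q
  | insert _ _ hns ih =>
    rw [Finset.sum_insert hns]
    exact rble_add φ v Q (h _ (Finset.mem_insert_self _ _))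
      (ih fun i hi => h i (Finset.mem_insert_of_mem hi))

end rble

lemma prod_inv_eq_sum {n m : ℕ} (a : Fin m → (Fin n → ℂ)) (μ : Fin m → ℂ)
    (ha : ∀ i, a i ≠ 0) (S : Finset (Fin m)) (c : Fin m → ℂ)
    (h1 : ∑ i ∈ S, c i • a i = 0) (h2 : ∑ i ∈ S, c i * μ i = 1) :
    ∏ i ∈ S, (affForm a μ i)⁻¹ =
      ∑ i ∈ S, algebraMap (MvPolynomial (Fin n) ℂ) (FractionRing (MvPolynomial (Fin n) ℂ))
          (C (c i)) * ∏ j ∈ S.erase i, (affForm a μ j)⁻¹ := by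
  classical
  have hone : ∑ i ∈ S, algebraMap (MvPolynomial (Fin n) ℂ)
      (FractionRing (MvPolynomial (Fin n) ℂ)) (C (c i)) * affForm a μ i = 1 := by
    unfold affForm
    rw [show ∑ i ∈ S, algebraMap (MvPolynomial (Fin n) ℂ)
        (FractionRing (MvPolynomial (Fin n) ℂ)) (C (c i)) *
        algebraMap (MvPolynomial (Fin n) ℂ) (FractionRing (MvPolynomial (Fin n) ℂ))
        (linForm (a i) + C (μ i)) = algebraMap (MvPolynomial (Fin n) ℂ)
        (FractionRing (MvPolynomial (Fin n) ℂ))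
        (∑ i ∈ S, C (c i) * (linForm (a i) + C (μ i))) by rw [map_sum]; simp [map_mul]]
    rw [sum_C_mul_aff a μ c S h1 h2, map_one]
  calc ∏ i ∈ S, (affForm a μ i)⁻¹
      = (∑ i ∈ S, algebraMap (MvPolynomial (Fin n) ℂ)
          (FractionRing (MvPolynomial (Fin n) ℂ)) (C (c i)) * affForm a μ i) *
        ∏ i ∈ S, (affForm a μ i)⁻¹ := by rw [hone, one_mul]
    _ = ∑ i ∈ S, algebraMap (MvPolynomial (Fin n) ℂ)
          (FractionRing (MvPolynomial (Fin n) ℂ)) (C (c i)) *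
          (affForm a μ i * ∏ j ∈ S, (affForm a μ j)⁻¹) := by
        rw [Finset.sum_mul]
        exact Finset.sum_congr rfl fun i _ => by ring
    _ = ∑ i ∈ S, algebraMap (MvPolynomial (Fin n) ℂ)
          (FractionRing (MvPolynomial (Fin n) ℂ)) (C (c i)) *
          ∏ j ∈ S.erase i, (affForm a μ j)⁻¹ := by
        refine Finset.sum_congr rfl fun i hi => ?_
        congr 1
        rw [← Finset.mul_prod_erase S (fun j => (affForm a μ j)⁻¹) hi, ← mul_assoc,
          mul_inv_cancel₀ (affForm_ne_zero μ ha i), one_mul]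

lemma main_ind {n m : ℕ} (a : Fin m → (Fin n → ℂ)) (μ : Fin m → ℂ) (ha : ∀ i, a i ≠ 0) :
    ∀ S : Finset (Fin m), Submodule.span ℂ (a '' (S : Set (Fin m))) = ⊤ →
      Rble ((algebraMap (MvPolynomial (Fin n) ℂ)
              (FractionRing (MvPolynomial (Fin n) ℂ))).comp (C : ℂ →+* MvPolynomial (Fin n) ℂ))
        (fun ℓ : Finset (Fin m) => ∏ i ∈ ℓ, (affForm a μ i)⁻¹)
        (fun ℓ : Finset (Fin m) => (∃ p, (ℓ : Set (Fin m)) ⊆ Xp a μ p) ∧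
          Submodule.span ℂ (a '' (ℓ : Set (Fin m))) = ⊤)
        (∏ i ∈ S, (affForm a μ i)⁻¹) := by
  classical
  intro S
  induction S using Finset.strongInduction with
  | _ S ih =>
    intro hS
    by_cases hpt : ∃ p : Fin n → ℂ, ∀ i ∈ S, (∑ j, a i j * p j) + μ i = 0
    · obtain ⟨p, hp⟩ := hpt
      exact rble_gen _ _ _ S ⟨⟨p, fun i hi => hp i hi⟩, hS⟩
    · push_neg at hpt
      obtain ⟨c, hc1, hc2⟩ := fredholm a μ S fun p => by
        obtain ⟨i, hi, hne⟩ := hpt p; exact ⟨i, hi, hne⟩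
      rw [prod_inv_eq_sum a μ ha S c hc1 hc2]
      refine rble_sum _ _ _ S _ fun i hi => ?_
      by_cases hci : c i = 0
      · rw [hci, map_zero, map_zero, zero_mul]
        exact rble_zero _ _ _
      · have herase : Submodule.span ℂ (a '' ((S.erase i : Finset (Fin m)) : Set (Fin m))) = ⊤ := by
          have hai : a i ∈ Submodule.span ℂ (a '' ((S.erase i : Finset (Fin m)) : Set (Fin m))) := by
            have hsum : c i • a i + ∑ j ∈ S.erase i, c j • a j = 0 := by
              rw [Finset.add_sum_erase S (fun j => c j • a j) hi]; exact hc1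
            have : a i = (-(c i)⁻¹) • ∑ j ∈ S.erase i, c j • a j := by
              have : c i • a i = -∑ j ∈ S.erase i, c j • a j := by
                have := hsum
                linear_combination (norm := module) this
              rw [neg_smul, ← smul_neg, ← this, smul_smul, inv_mul_cancel₀ hci, one_smul]
            rw [this]
            refine Submodule.smul_mem _ _ (Submodule.sum_mem _ fun j hj => ?_)
            exact Submodule.smul_mem _ _
              (Submodule.subset_span ⟨j, by simpa [and_comm] using hj, rfl⟩)
          refine top_unique ?_
          rw [← hS, Submodule.span_le]
          rintro x ⟨j, hj, rfl⟩
          by_cases hji : j = i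
          · exact hji ▸ hai
          · exact Submodule.subset_span ⟨j, by simp [Finset.mem_erase, hji, hj], rfl⟩
        have := ih (S.erase i) (Finset.erase_ssubset hi) herase
        exact rble_mul _ _ _ (c i) this

/-- Corrected Proposition 8.5: there exist complex numbers `c_ℓ`, indexed by pairs
`(p, ℓ)` with `p ∈ P(X, μ)` and `ℓ ∈ L(X_p)` (the spanning subsets of `X_p`), such that,
in `K = ℂ(x_1, …, x_n)`,
`∏ i, 1/(a i + μ i) = ∑_{p ∈ P(X,μ)} ∑_{ℓ ∈ L(X_p)} c_ℓ ∏_{i ∈ ℓ} 1/(a i + μ i)`. -/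
theorem corrected_prop_8_5 {n m : ℕ} (a : Fin m → (Fin n → ℂ)) (μ : Fin m → ℂ)
    (ha : ∀ i, a i ≠ 0)
    (hspan : Submodule.span ℂ (Set.range a) = ⊤) :
    ∃ c : (Fin n → ℂ) → Finset (Fin m) → ℂ,
      ∏ i, (affForm a μ i)⁻¹ =
        ∑ᶠ p ∈ armPoints a μ,
          ∑ᶠ ℓ ∈ {ℓ : Finset (Fin m) |
              (ℓ : Set (Fin m)) ⊆ Xp a μ p ∧ Submodule.span ℂ (a '' (ℓ : Set (Fin m))) = ⊤},
            algebraMap (MvPolynomial (Fin n) ℂ) (FractionRing (MvPolynomial (Fin n) ℂ))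
                (C (c p ℓ)) *
              ∏ i ∈ ℓ, (affForm a μ i)⁻¹ := by
  classical
  obtain ⟨d, hd, hrep⟩ := main_ind a μ ha Finset.univ
    (by rw [Finset.coe_univ, Set.image_univ]; exact hspan)
  simp only [RingHom.comp_apply] at hrep
  -- the point attached to a subset with a common point
  set pt : Finset (Fin m) → (Fin n → ℂ) := fun ℓ =>
    if h : ∃ p, (ℓ : Set (Fin m)) ⊆ Xp a μ p then h.choose else 0 with hptdef
  have hpt : ∀ ℓ : Finset (Fin m), (∃ p, (ℓ : Set (Fin m)) ⊆ Xp a μ p) →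
      (ℓ : Set (Fin m)) ⊆ Xp a μ (pt ℓ) := by
    intro ℓ h
    simp only [hptdef, dif_pos h]
    exact h.choose_spec
  have huniq : ∀ (p : Fin n → ℂ) (ℓ : Finset (Fin m)),
      (ℓ : Set (Fin m)) ⊆ Xp a μ p → Submodule.span ℂ (a '' (ℓ : Set (Fin m))) = ⊤ →
      p = pt ℓ := by
    intro p ℓ h1 h2
    exact point_unique h2 h1 (hpt ℓ ⟨p, h1⟩)
  refine ⟨fun p ℓ => if ((ℓ : Set (Fin m)) ⊆ Xp a μ p ∧
      Submodule.span ℂ (a '' (ℓ : Set (Fin m))) = ⊤) then d ℓ else 0, ?_⟩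
  set term : (Fin n → ℂ) → Finset (Fin m) →
      FractionRing (MvPolynomial (Fin n) ℂ) := fun p ℓ =>
    algebraMap (MvPolynomial (Fin n) ℂ) (FractionRing (MvPolynomial (Fin n) ℂ))
      (C (if ((ℓ : Set (Fin m)) ⊆ Xp a μ p ∧
          Submodule.span ℂ (a '' (ℓ : Set (Fin m))) = ⊤) then d ℓ else 0)) *
      ∏ i ∈ ℓ, (affForm a μ i)⁻¹ with htermdef
  show ∏ i, (affForm a μ i)⁻¹ =
    ∑ᶠ p ∈ armPoints a μ,
      ∑ᶠ ℓ ∈ {ℓ : Finset (Fin m) | (ℓ : Set (Fin m)) ⊆ Xp a μ p ∧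
          Submodule.span ℂ (a '' (ℓ : Set (Fin m))) = ⊤}, term p ℓ
  set G : (Fin n → ℂ) → FractionRing (MvPolynomial (Fin n) ℂ) := fun p =>
    ∑ ℓ ∈ Finset.univ.filter (fun ℓ : Finset (Fin m) => (ℓ : Set (Fin m)) ⊆ Xp a μ p ∧
        Submodule.span ℂ (a '' (ℓ : Set (Fin m))) = ⊤), term p ℓ with hGdef
  have hinner : ∀ p : Fin n → ℂ,
      (∑ᶠ ℓ ∈ {ℓ : Finset (Fin m) | (ℓ : Set (Fin m)) ⊆ Xp a μ p ∧
          Submodule.span ℂ (a '' (ℓ : Set (Fin m))) = ⊤}, term p ℓ) = G p := by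
    intro p
    rw [show {ℓ : Finset (Fin m) | (ℓ : Set (Fin m)) ⊆ Xp a μ p ∧
        Submodule.span ℂ (a '' (ℓ : Set (Fin m))) = ⊤}
        = ↑(Finset.univ.filter (fun ℓ : Finset (Fin m) => (ℓ : Set (Fin m)) ⊆ Xp a μ p ∧
          Submodule.span ℂ (a '' (ℓ : Set (Fin m))) = ⊤)) by ext ℓ; simp]
    rw [finsum_mem_coe_finset]
  rw [finsum_mem_congr rfl (fun p _ => hinner p)]
  -- the finite set of relevant points
  set t : Finset (Fin n → ℂ) :=
    (Finset.univ.filter fun ℓ : Finset (Fin m) => d ℓ ≠ 0).image pt with htdef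
  have htsub : ↑t ⊆ armPoints a μ := by
    intro p hp
    rw [htdef] at hp
    simp only [Finset.coe_image, Set.mem_image, Finset.coe_filter, Set.mem_setOf_eq,
      Finset.mem_univ, true_and] at hp
    obtain ⟨ℓ, hℓ, rfl⟩ := hp
    obtain ⟨hex, hsp⟩ := hd ℓ hℓ
    show Submodule.span ℂ (a '' Xp a μ (pt ℓ)) = ⊤
    refine top_unique ?_
    rw [← hsp]
    exact Submodule.span_mono (Set.image_mono (hpt ℓ hex))
  have hsupp : (armPoints a μ) ∩ Function.support G ⊆ ↑t := by
    intro p hp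
    obtain ⟨-, hGp⟩ := hp
    rw [Function.mem_support, hGdef] at hGp
    obtain ⟨ℓ, hℓmem, hℓne⟩ := Finset.exists_ne_zero_of_sum_ne_zero hGp
    simp only [Finset.mem_filter, Finset.mem_univ, true_and] at hℓmem
    have hdℓ : d ℓ ≠ 0 := by
      intro h0
      apply hℓne
      simp only [htermdef, hℓmem.1, hℓmem.2, and_self, if_true, h0, map_zero, zero_mul]
    have : p = pt ℓ := huniq p ℓ hℓmem.1 hℓmem.2
    rw [htdef]
    simp only [Finset.coe_image, Set.mem_image, Finset.coe_filter, Set.mem_setOf_eq,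
      Finset.mem_univ, true_and]
    exact ⟨ℓ, hdℓ, this.symm⟩
  rw [finsum_mem_eq_sum_of_subset G hsupp htsub]
  -- now everything is a finite sum
  rw [hrep]
  have hGfilter : ∀ p ∈ t, G p = ∑ ℓ : Finset (Fin m),
      if ((ℓ : Set (Fin m)) ⊆ Xp a μ p ∧
          Submodule.span ℂ (a '' (ℓ : Set (Fin m))) = ⊤) then term p ℓ else 0 := by
    intro p _
    simp only [hGdef]
    rw [Finset.sum_filter]
  rw [Finset.sum_congr rfl hGfilter, Finset.sum_comm]
  refine Finset.sum_congr rfl fun ℓ _ => ?_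
  by_cases hdℓ : d ℓ = 0
  · rw [hdℓ, map_zero, map_zero, zero_mul]
    refine (Finset.sum_eq_zero fun p _ => ?_).symm
    by_cases hc : ((ℓ : Set (Fin m)) ⊆ Xp a μ p ∧
        Submodule.span ℂ (a '' (ℓ : Set (Fin m))) = ⊤)
    · rw [if_pos hc]
      simp only [htermdef, hc.1, hc.2, and_self, if_true, hdℓ, map_zero, zero_mul]
    · rw [if_neg hc]
  · obtain ⟨hex, hsp⟩ := hd ℓ hdℓ
    have hcondpt : (ℓ : Set (Fin m)) ⊆ Xp a μ (pt ℓ) ∧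
        Submodule.span ℂ (a '' (ℓ : Set (Fin m))) = ⊤ := ⟨hpt ℓ hex, hsp⟩
    have hiff : ∀ p : Fin n → ℂ, ((ℓ : Set (Fin m)) ⊆ Xp a μ p ∧
        Submodule.span ℂ (a '' (ℓ : Set (Fin m))) = ⊤) ↔ p = pt ℓ := by
      intro p
      constructor
      · intro h; exact huniq p ℓ h.1 h.2
      · rintro rfl; exact hcondpt
    have hmem : pt ℓ ∈ t := by
      rw [htdef]
      exact Finset.mem_image.mpr ⟨ℓ, Finset.mem_filter.mpr ⟨Finset.mem_univ _, hdℓ⟩, rfl⟩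
    rw [Finset.sum_congr rfl (fun p _ => if_congr (hiff p) rfl rfl),
      Finset.sum_ite_eq' t (pt ℓ) (fun p => term p ℓ), if_pos hmem]
    simp only [htermdef, hcondpt.1, hcondpt.2, and_self, if_true]
end

section
/- Let X = (a_1, ..., a_m) be a finite list of nonzero vectors spanning ℂ^n, with m > n or more generally with at least one sublist of X that spans ℂ^n and is linearly dependent possible. Then the set of parameter vectors μ ∈ ℂ^m for which the data fail to be generic — i.e. for which there exists a point p ∈ ℂ^n such that X_p := { i : ⟨a_i | p⟩ + μ_i = 0 } spans ℂ^n but {a_i : i ∈ X_p} is linearly dependent — is contained in a finite union of proper affine subspaces (hyperplanes) of ℂ^m. In particular, for generic μ every point p of the arrangement has X_p a basis of ℂ^n extracted from X, and conversely every basis extracted from X gives rise to a point of the arrangement. -/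
/-- The set of parameter vectors `μ ∈ ℂ^m` for which the data `(X, μ)` fail to be
generic — i.e. for which there is a point `p` such that the sublist
`X_p = {i | ⟨a i | p⟩ + μ i = 0}` spans `ℂ^n` but `{a i : i ∈ X_p}` is linearly
dependent — is contained in a finite union of proper affine subspaces of `ℂ^m`.
In particular, for `μ` outside this finite union, every point of the arrangement has
`X_p` a basis of `ℂ^n` extracted from `X`. -/
theorem nongeneric_parameters_thin (n m : ℕ) (a : Fin m → (Fin n → ℂ))
    (ha : ∀ i, a i ≠ 0)
    (hspan : Submodule.span ℂ (Set.range a) = ⊤) :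
    ∃ s : Finset (AffineSubspace ℂ (Fin m → ℂ)),
      (∀ W ∈ s, W ≠ ⊤) ∧
      {μ : Fin m → ℂ | ∃ p : Fin n → ℂ,
          Submodule.span ℂ (a '' {i | (∑ j, a i j * p j) + μ i = 0}) = ⊤ ∧
          ¬ LinearIndependent ℂ
              (fun i : {i | (∑ j, a i j * p j) + μ i = 0} => a i)} ⊆
        ⋃ W ∈ s, (W : Set (Fin m → ℂ)) := by
  classical
  -- For a subset `S`, `P S` says there is a nontrivial dependence supported on `S`.
  set P : Finset (Fin m) → Prop := fun S => ∃ c : Fin m → ℂ,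
    c ≠ 0 ∧ (∀ i, c i ≠ 0 → i ∈ S) ∧ ∑ i, c i • a i = 0 with hP
  -- choose a dependence for each such `S`
  let c : Finset (Fin m) → (Fin m → ℂ) := fun S => if h : P S then h.choose else 0
  have hc : ∀ S, P S → (c S ≠ 0 ∧ (∀ i, c S i ≠ 0 → i ∈ S) ∧ ∑ i, c S i • a i = 0) := by
    intro S h
    simpa only [c, dif_pos h] using h.choose_spec
  -- the linear functional `μ ↦ ∑ i, c S i * μ i`
  let f : Finset (Fin m) → ((Fin m → ℂ) →ₗ[ℂ] ℂ) := fun S =>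
    { toFun := fun μ => ∑ i, c S i * μ i
      map_add' := by
        intro x y
        simp [mul_add, Finset.sum_add_distrib]
      map_smul' := by
        intro r x
        simp only [Pi.smul_apply, smul_eq_mul, RingHom.id_apply, Finset.mul_sum]
        exact Finset.sum_congr rfl fun i _ => by ring }
  refine ⟨((Finset.univ : Finset (Finset (Fin m))).filter P).image
      (fun S => (LinearMap.ker (f S)).toAffineSubspace), ?_, ?_⟩
  · -- each chosen affine subspace is proper
    intro W hW
    rcases Finset.mem_image.mp hW with ⟨S, hS, rfl⟩
    have hPS : P S := (Finset.mem_filter.mp hS).2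
    obtain ⟨hne, -, -⟩ := hc S hPS
    obtain ⟨i₀, hi₀⟩ := Function.ne_iff.mp hne
    intro htop
    have hmem : (Pi.single i₀ 1 : Fin m → ℂ) ∈ (LinearMap.ker (f S)).toAffineSubspace := by
      rw [htop]; trivial
    rw [Submodule.mem_toAffineSubspace, LinearMap.mem_ker] at hmem
    have hval : ∑ i, c S i * (Pi.single i₀ 1 : Fin m → ℂ) i = c S i₀ := by
      rw [Finset.sum_eq_single i₀]
      · simp
      · intro b _ hb; simp [Pi.single_eq_of_ne hb]
      · simp
    exact hi₀ (by simpa [f, hval] using hmem)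
  · -- the set of nongeneric parameters is covered
    rintro μ ⟨p, -, hdep⟩
    set S₀ : Set (Fin m) := {i | (∑ j, a i j * p j) + μ i = 0} with hS₀
    set S : Finset (Fin m) := S₀.toFinset with hS
    rw [Fintype.not_linearIndependent_iff] at hdep
    obtain ⟨g, hg0, i₁, hi₁⟩ := hdep
    -- extend `g` to `Fin m` by zero, witnessing `P S`
    have hPS : P S := by
      refine ⟨fun i => if h : i ∈ S₀ then g ⟨i, h⟩ else 0, ?_, ?_, ?_⟩
      · intro h
        apply hi₁
        have := congrFun h (i₁ : Fin m)
        simpa [i₁.2] using this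
      · intro i hi
        rw [hS, Set.mem_toFinset]
        by_contra hn
        simp [hn] at hi
      · rw [← hg0]
        rw [← Finset.sum_subset (Finset.subset_univ S)
          (by intro i _ hi
              rw [hS, Set.mem_toFinset] at hi
              simp [hi])]
        rw [show S = S₀.toFinset from rfl, ← Finset.sum_set_coe]
        exact Finset.sum_congr rfl fun i _ => by simp [i.2]
    obtain ⟨-, hsupp, hrel⟩ := hc S hPS
    have hμ : ∀ i, c S i ≠ 0 → μ i = -(∑ j, a i j * p j) := by
      intro i hi
      have hiS := hsupp i hi
      rw [hS, Set.mem_toFinset] at hiS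
      exact eq_neg_of_add_eq_zero_right hiS
    have hj : ∀ j, ∑ i, c S i * a i j = 0 := by
      intro j
      have := congrFun hrel j
      simpa using this
    have key : ∑ i, c S i * μ i = 0 := by
      have h1 : ∀ i, c S i * μ i = -(∑ j, c S i * (a i j * p j)) := by
        intro i
        by_cases hi : c S i = 0
        · simp [hi]
        · rw [hμ i hi, mul_neg, Finset.mul_sum]
      calc ∑ i, c S i * μ i
          = ∑ i, -(∑ j, c S i * (a i j * p j)) :=
            Finset.sum_congr rfl fun i _ => h1 i
        _ = -(∑ i, ∑ j, c S i * (a i j * p j)) := by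
            rw [← Finset.sum_neg_distrib]
        _ = -(∑ j, ∑ i, c S i * (a i j * p j)) := by rw [Finset.sum_comm]
        _ = -(∑ j, (∑ i, c S i * a i j) * p j) := by
            congr 1
            exact Finset.sum_congr rfl fun j _ => by
              rw [Finset.sum_mul]
              exact Finset.sum_congr rfl fun i _ => by ring
        _ = 0 := by simp [hj]
    refine Set.mem_iUnion₂.mpr ⟨(LinearMap.ker (f S)).toAffineSubspace,
      Finset.mem_image.mpr ⟨S, Finset.mem_filter.mpr ⟨Finset.mem_univ _, hPS⟩, rfl⟩, ?_⟩
    · show μ ∈ (LinearMap.ker (f S)).toAffineSubspace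
      rw [Submodule.mem_toAffineSubspace, LinearMap.mem_ker]
      exact key
end
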